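/- arXiv:1406.5143 — 6 statements merged into one kernel-verified Lean document; each statement's English description precedes it below -/
import Mathlib

section
/- Let p = Bernoulli((1+b)/2) and q = Bernoulli((1-b)/2) with b ∈ [0, 1/2]. Then D_KL(p‖q) ≤ 6b². -/
/-- For `b ∈ [0, 1/2]`, the KL divergence between `Bernoulli((1+b)/2)` and
`Bernoulli((1-b)/2)` is at most `6 b²`. -/
theorem stmt4 (b : ℝ) (hb0 : 0 ≤ b) (hb : b ≤ 1 / 2) :
    ((1 + b) / 2) * Real.log (((1 + b) / 2) / ((1 - b) / 2))
      + ((1 - b) / 2) * Real.log (((1 - b) / 2) / ((1 + b) / 2)) ≤ 6 * b ^ 2 := by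
  have h1 : (0:ℝ) < 1 + b := by linarith
  have h2 : (0:ℝ) < 1 - b := by linarith
  have e1 : ((1 + b) / 2) / ((1 - b) / 2) = (1 + b) / (1 - b) := by
    field_simp
  have e2 : ((1 - b) / 2) / ((1 + b) / 2) = (1 - b) / (1 + b) := by
    field_simp
  rw [e1, e2, Real.log_div h1.ne' h2.ne', Real.log_div h2.ne' h1.ne']
  have key : Real.log (1 + b) - Real.log (1 - b) ≤ 3 * b := by
    have l1 : Real.log (1 + b) ≤ b := by
      have := Real.log_le_sub_one_of_pos h1
      linarith
    have l2 : -Real.log (1 - b) ≤ 2 * b := by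
      have := Real.log_le_sub_one_of_pos (x := (1 - b)⁻¹) (by positivity)
      rw [Real.log_inv] at this
      have hinv : (1 - b)⁻¹ - 1 = b / (1 - b) := by field_simp; ring
      have hle : b / (1 - b) ≤ 2 * b := by
        rw [div_le_iff₀ h2]; nlinarith
      linarith [this, hinv ▸ this, hle]
    linarith
  have : ((1 + b) / 2) * (Real.log (1 + b) - Real.log (1 - b))
      + ((1 - b) / 2) * (Real.log (1 - b) - Real.log (1 + b))
      = b * (Real.log (1 + b) - Real.log (1 - b)) := by ring
  rw [this]
  nlinarith [mul_le_mul_of_nonneg_left key hb0]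
end

section
/- Let α, γ ∈ (0,1] with γ < α, and let distributions D₀, D₁ on ℝ be: under D₀, X = Y/B with probability α and 0 otherwise; under D₁, X = 1 with probability γ, X = Y/B with probability α − γ, and 0 otherwise (with 0 < Y, B). Then D_KL(D₀ ‖ D₁) ≤ γ(1 + γ/(α − γ)). -/
/-- KL divergence between the two distributions on `{0, Y/B, 1}`:
`D₀` puts mass `α` at `Y/B` and `1 - α` at `0`; `D₁` puts mass `γ` at `1`,
`α - γ` at `Y/B` and `1 - α` at `0`.  Then
`D_KL(D₀‖D₁) = (1-α) log((1-α)/(1-α)) + α log(α/(α-γ)) + 0 · log(0/γ) ≤ γ (1 + γ/(α-γ))`. -/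
theorem stmt5 (Y B α γ : ℝ) (hY : 0 < Y) (hB : 0 < B)
    (hγ : 0 < γ) (hγα : γ < α) (hα : α ≤ 1) :
    (1 - α) * Real.log ((1 - α) / (1 - α)) + α * Real.log (α / (α - γ))
      + 0 * Real.log (0 / γ) ≤ γ * (1 + γ / (α - γ)) := by
  have hd : 0 < α - γ := by linarith
  have h1 : (1 - α) * Real.log ((1 - α) / (1 - α)) = 0 := by
    rcases eq_or_lt_of_le hα with h | h
    · simp [h]
    · rw [div_self (by linarith), Real.log_one, mul_zero]
  have hα0 : 0 < α := by linarith
  have hx : 0 < α / (α - γ) := div_pos hα0 hd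
  have hlog : Real.log (α / (α - γ)) ≤ α / (α - γ) - 1 :=
    Real.log_le_sub_one_of_pos hx
  have key : α * Real.log (α / (α - γ)) ≤ γ * (1 + γ / (α - γ)) := by
    calc α * Real.log (α / (α - γ)) ≤ α * (α / (α - γ) - 1) := by
          exact mul_le_mul_of_nonneg_left hlog hα0.le
      _ = γ * (1 + γ / (α - γ)) := by field_simp; ring
  rw [h1]
  linarith [key]
end

section
/- Under the distribution where y = Y almost surely and x = 1 with probability γ, x = Y/B with probability α − γ, x = 0 with probability 1 − α (0 < γ < α ≤ 1, 0 < Y ≤ B/2), the unconstrained least-squares minimizer w₁* = E[yx]/E[x²] equals B·(Y²(α−γ) + BYγ)/(Y²(α−γ) + B²γ), and satisfies (w₁* − B)² ≥ B⁴γ²((Y−B)/(Y²α + B²γ))². -/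
/-- Under the distribution where `y = Y` a.s. and `x = 1` w.p. `γ`, `x = Y/B` w.p. `α - γ`,
`x = 0` w.p. `1 - α`, the unconstrained least-squares minimizer `w₁* = E[yx]/E[x²]`
equals `B (Y²(α-γ) + BYγ) / (Y²(α-γ) + B²γ)` and satisfies
`(w₁* - B)² ≥ B⁴ γ² ((Y-B)/(Y²α + B²γ))²`. -/
theorem stmt6 (Y B α γ : ℝ) (hY : 0 < Y) (hB : 2 * Y ≤ B)
    (hγ : 0 < γ) (hγα : γ < α) (hα : α ≤ 1) :
    (Y * (γ * 1 + (α - γ) * (Y / B))) / (γ * 1 ^ 2 + (α - γ) * (Y / B) ^ 2)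
        = B * (Y ^ 2 * (α - γ) + B * Y * γ) / (Y ^ 2 * (α - γ) + B ^ 2 * γ)
      ∧ (B * (Y ^ 2 * (α - γ) + B * Y * γ) / (Y ^ 2 * (α - γ) + B ^ 2 * γ) - B) ^ 2
        ≥ B ^ 4 * γ ^ 2 * ((Y - B) / (Y ^ 2 * α + B ^ 2 * γ)) ^ 2 := by
  have hB0 : 0 < B := lt_of_lt_of_le (by linarith) hB
  have hag : 0 < α - γ := by linarith
  have hD : 0 < Y ^ 2 * (α - γ) + B ^ 2 * γ := by positivity
  have hD' : 0 < Y ^ 2 * α + B ^ 2 * γ := by nlinarith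
  have hden : γ * 1 ^ 2 + (α - γ) * (Y / B) ^ 2 ≠ 0 := by positivity
  constructor
  · field_simp
    ring
  · have h1 : B * (Y ^ 2 * (α - γ) + B * Y * γ) / (Y ^ 2 * (α - γ) + B ^ 2 * γ) - B
        = B ^ 2 * γ * (Y - B) / (Y ^ 2 * (α - γ) + B ^ 2 * γ) := by
      field_simp
      ring
    rw [h1, div_pow, div_pow]
    rw [ge_iff_le, mul_div_assoc', div_le_div_iff₀ (by positivity) (by positivity)]
    have key : (Y ^ 2 * (α - γ) + B ^ 2 * γ) ^ 2 ≤ (Y ^ 2 * α + B ^ 2 * γ) ^ 2 := by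
      apply pow_le_pow_left₀ hD.le
      nlinarith [mul_pos (mul_pos hY hY) hγ]
    nlinarith [mul_le_mul_of_nonneg_left key (sq_nonneg (B ^ 2 * γ * (Y - B)))]
end

section
/- Fix σ ∈ {−1,+1}^{d'} and b = min{1/2, √(d'/(6m))}. Under the distribution D_σ where x is uniform over the first d' standard basis vectors of ℝ^{d'} and, conditioned on x = e_i, y = Y with probability (1+σ_i b)/2 and y = −Y otherwise, the minimizer of R(w) = E[(⟨w,x⟩−y)²] over {w : ‖w‖ ≤ B} has coordinates w*_i = σ_i · min{Yb, B/√d'}. -/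
open MeasureTheory
open scoped ENNReal

lemma my_integrable_dirac {α E : Type*} [MeasurableSpace α] [MeasurableSingletonClass α]
    [NormedAddCommGroup E] {f : α → E} (hf : StronglyMeasurable f) (a : α) :
    Integrable f (Measure.dirac a) := by
  refine ⟨hf.aestronglyMeasurable, ?_⟩
  rw [HasFiniteIntegral, lintegral_dirac]
  exact ENNReal.coe_lt_top

/-- Under the distribution `D_σ` where `x` is uniform over the standard basis vectors
`e₁, …, e_{d'}` of `ℝ^{d'}` and, conditioned on `x = e_i`, `y = Y` with probability
`(1 + σᵢ b)/2` and `y = -Y` otherwise (with `b = min{1/2, √(d'/(6m))}`), the minimizer of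
`R(w) = E[(⟨w,x⟩ - y)²]` over `{w : ‖w‖ ≤ B}` has coordinates
`w*ᵢ = σᵢ · min{Y b, B/√d'}`. -/
theorem stmt12 (d' m : ℕ) (hd' : 0 < d') (hm : 0 < m) (Y B : ℝ) (hY : 0 < Y) (hB : 0 < B)
    (σ : Fin d' → ℝ) (hσ : ∀ i, σ i = 1 ∨ σ i = -1)
    (b : ℝ) (hb : b = min (1 / 2) (Real.sqrt (d' / (6 * m))))
    (μ : Measure (EuclideanSpace ℝ (Fin d') × ℝ))
    (hμ : μ = (d' : ℝ≥0∞)⁻¹ • ∑ i : Fin d',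
        (ENNReal.ofReal ((1 + σ i * b) / 2) • Measure.dirac (EuclideanSpace.single i 1, Y)
          + ENNReal.ofReal ((1 - σ i * b) / 2) • Measure.dirac (EuclideanSpace.single i 1, -Y)))
    (wstar : EuclideanSpace ℝ (Fin d'))
    (hws : ∀ i, wstar i = σ i * min (Y * b) (B / Real.sqrt d')) :
    ‖wstar‖ ≤ B ∧
      ∀ w : EuclideanSpace ℝ (Fin d'), ‖w‖ ≤ B →
        (∫ p, (inner ℝ wstar p.1 - p.2 : ℝ) ^ 2 ∂μ) ≤ ∫ p, (inner ℝ w p.1 - p.2 : ℝ) ^ 2 ∂μ := by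
  have hd'R : (0:ℝ) < d' := Nat.cast_pos.mpr hd'
  have hsq : (0:ℝ) < Real.sqrt d' := Real.sqrt_pos.mpr hd'R
  have hmR : (0:ℝ) < m := Nat.cast_pos.mpr hm
  have hb0 : 0 < b := by
    rw [hb]
    exact lt_min (by norm_num) (Real.sqrt_pos.mpr (by positivity))
  have hb2 : b ≤ 1/2 := by rw [hb]; exact min_le_left _ _
  have hσabs : ∀ i, σ i * σ i = 1 := by
    intro i; rcases hσ i with h | h <;> rw [h] <;> norm_num
  have hσb : ∀ i, |σ i * b| ≤ 1/2 := by
    intro i; rcases hσ i with h | h <;> rw [h] <;>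
      rw [abs_le] <;> constructor <;> nlinarith
  have hp : ∀ i, 0 ≤ (1 + σ i * b)/2 := by
    intro i; have := (abs_le.mp (hσb i)).1; linarith
  have hq : ∀ i, 0 ≤ (1 - σ i * b)/2 := by
    intro i; have := (abs_le.mp (hσb i)).2; linarith
  set c : ℝ := min (Y*b) (B / Real.sqrt d') with hc
  have hc0 : 0 < c := lt_min (by positivity) (by positivity)
  have hcB : c ≤ B / Real.sqrt d' := min_le_right _ _
  have hcYb : c ≤ Y * b := min_le_left _ _
  -- norm squared formula
  have hnormsq : ∀ v : EuclideanSpace ℝ (Fin d'), ‖v‖^2 = ∑ i, (v i)^2 := by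
    intro v
    rw [EuclideanSpace.norm_eq, Real.sq_sqrt (by positivity)]
    simp [Real.norm_eq_abs, sq_abs]
  -- norm of wstar
  have hws_normsq : ‖wstar‖^2 = d' * c^2 := by
    rw [hnormsq]
    have : ∀ i : Fin d', (wstar i)^2 = c^2 := by
      intro i; rw [hws i]; linear_combination c^2 * hσabs i
    rw [Finset.sum_congr rfl (fun i _ => this i)]
    simp [mul_comm]
  have hws_norm : ‖wstar‖ ≤ B := by
    have h1 : ‖wstar‖^2 ≤ B^2 := by
      rw [hws_normsq]
      have : (d':ℝ) * c^2 ≤ (d':ℝ) * (B / Real.sqrt d')^2 := by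
        apply mul_le_mul_of_nonneg_left _ hd'R.le
        exact pow_le_pow_left₀ hc0.le hcB 2
      calc (d':ℝ) * c^2 ≤ (d':ℝ) * (B / Real.sqrt d')^2 := this
        _ = B^2 := by
            rw [div_pow, Real.sq_sqrt hd'R.le]
            field_simp
    nlinarith [norm_nonneg wstar]
  refine ⟨hws_norm, ?_⟩
  -- measurability
  have hmeas : ∀ w : EuclideanSpace ℝ (Fin d'), StronglyMeasurable
      fun p : EuclideanSpace ℝ (Fin d') × ℝ => ((inner ℝ w p.1 : ℝ) - p.2)^2 :=
    fun w => (((continuous_const.inner continuous_fst).sub continuous_snd).pow 2).stronglyMeasurable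
  -- integral formula
  have key : ∀ w : EuclideanSpace ℝ (Fin d'),
      (∫ p, (inner ℝ w p.1 - p.2 : ℝ)^2 ∂μ)
        = (d':ℝ)⁻¹ * ∑ i, ((w i - σ i * (Y*b))^2 + Y^2*(1 - b^2)) := by
    intro w
    have hint1 : ∀ i : Fin d', Integrable (fun p : EuclideanSpace ℝ (Fin d') × ℝ =>
        ((inner ℝ w p.1 : ℝ) - p.2)^2)
        (ENNReal.ofReal ((1 + σ i * b) / 2) • Measure.dirac (EuclideanSpace.single i 1, Y)) :=
      fun i => (my_integrable_dirac (hmeas w) _).smul_measure ENNReal.ofReal_ne_top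
    have hint2 : ∀ i : Fin d', Integrable (fun p : EuclideanSpace ℝ (Fin d') × ℝ =>
        ((inner ℝ w p.1 : ℝ) - p.2)^2)
        (ENNReal.ofReal ((1 - σ i * b) / 2) • Measure.dirac (EuclideanSpace.single i 1, -Y)) :=
      fun i => (my_integrable_dirac (hmeas w) _).smul_measure ENNReal.ofReal_ne_top
    rw [hμ, integral_smul_measure,
      integral_finset_sum_measure (fun i _ => integrable_add_measure.mpr ⟨hint1 i, hint2 i⟩)]
    have hterm : ∀ i : Fin d',
        (∫ p, ((inner ℝ w p.1 : ℝ) - p.2)^2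
          ∂(ENNReal.ofReal ((1 + σ i * b) / 2) • Measure.dirac (EuclideanSpace.single i 1, Y)
            + ENNReal.ofReal ((1 - σ i * b) / 2) • Measure.dirac (EuclideanSpace.single i 1, -Y)))
          = (w i - σ i * (Y*b))^2 + Y^2*(1 - b^2) := by
      intro i
      rw [integral_add_measure (hint1 i) (hint2 i), integral_smul_measure, integral_smul_measure,
        integral_dirac, integral_dirac]
      simp only [smul_eq_mul, ENNReal.toReal_ofReal (hp i), ENNReal.toReal_ofReal (hq i)]
      have hiw : (inner ℝ w (EuclideanSpace.single i (1:ℝ)) : ℝ) = w i := by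
        rw [EuclideanSpace.inner_single_right]; simp
      rw [hiw]
      linear_combination (-(Y^2*b^2)) * hσabs i
    rw [Finset.sum_congr rfl (fun i _ => hterm i)]
    simp [ENNReal.toReal_inv, smul_eq_mul]
  intro w hw
  rw [key wstar, key w]
  have hred : ∑ i, (wstar i - σ i * (Y*b))^2 ≤ ∑ i, (w i - σ i * (Y*b))^2 := by
    set a : EuclideanSpace ℝ (Fin d') := WithLp.toLp 2 (fun i => σ i * (Y * b)) with ha
    have haapp : ∀ i, a i = σ i * (Y*b) := fun i => rfl
    rcases le_or_gt (Y*b) (B / Real.sqrt d') with hcase | hcase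
    · have hceq : c = Y*b := min_eq_left hcase
      have : ∑ i, (wstar i - σ i * (Y*b))^2 = 0 := by
        apply Finset.sum_eq_zero
        intro i _
        rw [hws i, hceq]
        ring
      rw [this]
      exact Finset.sum_nonneg fun i _ => sq_nonneg _
    · have hceq : c = B / Real.sqrt d' := min_eq_right hcase.le
      have hna : ‖a‖ = Real.sqrt d' * (Y*b) := by
        have h2 : ‖a‖^2 = (Real.sqrt d' * (Y*b))^2 := by
          rw [hnormsq]
          have : ∀ i : Fin d', (a i)^2 = (Y*b)^2 := by
            intro i; rw [haapp i]; linear_combination (Y*b)^2 * hσabs i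
          rw [Finset.sum_congr rfl (fun i _ => this i)]
          rw [Finset.sum_const, Finset.card_univ, Fintype.card_fin, nsmul_eq_mul]
          have hsd : Real.sqrt d' * Real.sqrt d' = (d':ℝ) := Real.mul_self_sqrt hd'R.le
          linear_combination (-(Y*b)^2) * hsd
        have hpos : 0 ≤ Real.sqrt d' * (Y*b) := by positivity
        rw [← Real.sqrt_sq (norm_nonneg a), h2, Real.sqrt_sq hpos]
      have hBa : B ≤ ‖a‖ := by
        rw [hna]
        have : B = Real.sqrt d' * (B / Real.sqrt d') := by field_simp
        rw [this]
        exact mul_le_mul_of_nonneg_left hcase.le hsq.le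
      have hL : ∑ i, (wstar i - σ i * (Y*b))^2 = (‖a‖ - B)^2 := by
        have : ∀ i : Fin d', (wstar i - σ i * (Y*b))^2 = (Y*b - c)^2 := by
          intro i
          rw [hws i]
          linear_combination (c - Y*b)^2 * hσabs i
        rw [Finset.sum_congr rfl (fun i _ => this i)]
        rw [Finset.sum_const, Finset.card_univ, Fintype.card_fin, nsmul_eq_mul]
        rw [hna, hceq]
        have hfac : Real.sqrt d' * (Y*b) - B = Real.sqrt d' * (Y*b - B / Real.sqrt d') := by
          field_simp
        rw [hfac, mul_pow, Real.sq_sqrt hd'R.le]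
      have hR : (‖a‖ - B)^2 ≤ ∑ i, (w i - σ i * (Y*b))^2 := by
        have h1 : ‖a‖ - B ≤ ‖w - a‖ := by
          have := norm_sub_norm_le a w
          rw [norm_sub_rev a w] at this
          linarith
        have h0 : 0 ≤ ‖a‖ - B := by linarith
        have h2 : (‖a‖ - B)^2 ≤ ‖w - a‖^2 := pow_le_pow_left₀ h0 h1 2
        have h3 : ‖w - a‖^2 = ∑ i, (w i - σ i * (Y*b))^2 := by
          rw [hnormsq]
          apply Finset.sum_congr rfl
          intro i _
          rfl
        calc (‖a‖ - B)^2 ≤ ‖w - a‖^2 := h2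
          _ = _ := h3
      rw [hL]; exact hR
  apply mul_le_mul_of_nonneg_left _ (by positivity)
  rw [Finset.sum_add_distrib, Finset.sum_add_distrib]
  exact add_le_add_left hred _
end

section
/- For real numbers B ≥ 2Y > 0 and integer m ≥ 1, with γ = 1/(3m) and α = 1, if m ≤ B²/Y² then (1/8)·Y²·α·B²·γ²·((Y−B)/(Y²α + B²γ))²·(1 − √((m/2)·γ·(1 + γ/(α−γ)))) ≥ (3/4000)·Y². -/
set_option maxHeartbeats 1000000 in
/-- Case `m ≤ B²/Y²` of the one-dimensional lower bound: with `α = 1` and `γ = 1/(3m)`,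
the quantity `(1/8) Y² α B² γ² ((Y-B)/(Y²α + B²γ))² (1 - √((m/2) γ (1 + γ/(α-γ))))`
is at least `(3/4000) Y²`. -/
theorem stmt16 (Y B : ℝ) (m : ℕ) (hm : 1 ≤ m) (hY : 0 < Y) (hB : 2 * Y ≤ B)
    (hmB : (m : ℝ) ≤ B ^ 2 / Y ^ 2) (α γ : ℝ) (hα : α = 1) (hγ : γ = 1 / (3 * m)) :
    (1 / 8) * Y ^ 2 * α * B ^ 2 * γ ^ 2 * ((Y - B) / (Y ^ 2 * α + B ^ 2 * γ)) ^ 2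
        * (1 - Real.sqrt ((m / 2) * γ * (1 + γ / (α - γ))))
      ≥ (3 / 4000) * Y ^ 2 := by
  have hmR : (1:ℝ) ≤ m := by exact_mod_cast hm
  have hBpos : 0 < B := by linarith
  have h3m : (0:ℝ) < 3 * m := by linarith
  subst hα
  have hγpos : 0 < γ := by rw [hγ]; positivity
  have hγle : γ ≤ 1/3 := by
    rw [hγ, div_le_div_iff₀ h3m (by norm_num : (0:ℝ) < 3)]
    nlinarith
  have hmne : (m:ℝ) ≠ 0 := by positivity
  have hmγ : (m:ℝ) * γ = 1/3 := by rw [hγ]; field_simp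
  have hY2 : (0:ℝ) < Y^2 := by positivity
  have h1 : (m:ℝ) * Y^2 ≤ B^2 := (le_div_iff₀ hY2).mp hmB
  have hkey : Y ^ 2 ≤ 3 * B ^ 2 * γ := by
    have h2 := mul_le_mul_of_nonneg_right h1 (le_of_lt hγpos)
    nlinarith [h2, hmγ, hY2]
  -- sqrt bound
  have h1γ : (0:ℝ) < 1 - γ := by linarith
  have harg_eq : ((m:ℝ) / 2) * γ * (1 + γ / (1 - γ)) = (1/6) / (1 - γ) := by
    field_simp
    nlinarith [hmγ]
  have harg : ((m:ℝ) / 2) * γ * (1 + γ / (1 - γ)) ≤ 1/4 := by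
    rw [harg_eq, div_le_iff₀ h1γ]
    linarith
  have hs : Real.sqrt (((m:ℝ) / 2) * γ * (1 + γ / (1 - γ))) ≤ 1/2 := by
    calc Real.sqrt (((m:ℝ) / 2) * γ * (1 + γ / (1 - γ)))
        ≤ Real.sqrt (1/4) := Real.sqrt_le_sqrt harg
      _ = 1/2 := by
          rw [show (1/4:ℝ) = (1/2)^2 by norm_num, Real.sqrt_sq (by norm_num)]
  have hD : (0:ℝ) < Y ^ 2 * 1 + B ^ 2 * γ := by positivity
  have hmain : (3/2000)*Y^2 ≤ (1/8) * Y ^ 2 * 1 * B ^ 2 * γ ^ 2 *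
      ((Y - B) / (Y ^ 2 * 1 + B ^ 2 * γ)) ^ 2 := by
    rw [div_pow, ← mul_div_assoc, le_div_iff₀ (by positivity)]
    have h16 : (Y^2 + B^2*γ)^2 ≤ 16*(B^2*γ)^2 := by
      nlinarith [hkey, mul_pos (mul_pos hY2 (by positivity : (0:ℝ) < B^2)) hγpos]
    have hsq : B^2/4 ≤ (Y-B)^2 := by nlinarith
    have hA := mul_le_mul_of_nonneg_left h16 (by positivity : (0:ℝ) ≤ (3/2000)*Y^2)
    have hC := mul_le_mul_of_nonneg_left hsq (by positivity : (0:ℝ) ≤ (1/8)*Y^2*γ^2*B^2)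
    have hpos : (0:ℝ) ≤ Y^2*B^4*γ^2 := by positivity
    linarith [hA, hC, hpos]
  have hrest : (0:ℝ) ≤ (1/8) * Y ^ 2 * 1 * B ^ 2 * γ ^ 2 *
      ((Y - B) / (Y ^ 2 * 1 + B ^ 2 * γ)) ^ 2 := by positivity
  have h2 : (1:ℝ)/2 ≤ 1 - Real.sqrt (((m:ℝ) / 2) * γ * (1 + γ / (1 - γ))) := by linarith
  have h3 := mul_le_mul_of_nonneg_left h2 hrest
  linarith [h3, hmain]
end

section
/- For real numbers B ≥ 2Y > 0 and integer m with m > B²/Y², setting α = B²/(Y²m) and γ = 1/(3m), we have (1/8)·Y²·α·B²·γ²·((Y−B)/(Y²α + B²γ))²·(1 − √((m/2)·γ·(1 + γ/(α−γ)))) ≥ 0.001·B²/m. -/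
/-- Case `m > B²/Y²` of the one-dimensional lower bound: with `α = B²/(Y²m)` and
`γ = 1/(3m)`, the quantity
`(1/8) Y² α B² γ² ((Y-B)/(Y²α + B²γ))² (1 - √((m/2) γ (1 + γ/(α-γ))))`
is at least `0.001 B²/m`. -/
theorem stmt17 (Y B : ℝ) (m : ℕ) (hY : 0 < Y) (hB : 2 * Y ≤ B)
    (hmB : B ^ 2 / Y ^ 2 < (m : ℝ)) (α γ : ℝ)
    (hα : α = B ^ 2 / (Y ^ 2 * m)) (hγ : γ = 1 / (3 * m)) :
    (1 / 8) * Y ^ 2 * α * B ^ 2 * γ ^ 2 * ((Y - B) / (Y ^ 2 * α + B ^ 2 * γ)) ^ 2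
        * (1 - Real.sqrt ((m / 2) * γ * (1 + γ / (α - γ))))
      ≥ 0.001 * B ^ 2 / m := by
  have hB0 : 0 < B := lt_of_lt_of_le (by linarith) hB
  have hm : (0:ℝ) < m := lt_trans (by positivity) hmB
  have hm0 : (m:ℝ) ≠ 0 := ne_of_gt hm
  have hY0 : Y ≠ 0 := ne_of_gt hY
  have hB4 : 4 * Y ^ 2 ≤ B ^ 2 := by nlinarith
  have hγpos : 0 < γ := by rw [hγ]; positivity
  have hα4 : 4 / (m:ℝ) ≤ α := by
    rw [hα, div_le_div_iff₀ hm (by positivity)]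
    nlinarith
  have hαγ : 11 / (3 * (m:ℝ)) ≤ α - γ := by
    rw [hγ]
    have : 4 / (m:ℝ) - 1 / (3*m) = 11 / (3*m) := by field_simp; ring
    linarith
  have hαγpos : 0 < α - γ := lt_of_lt_of_le (by positivity) hαγ
  have hfrac : γ / (α - γ) ≤ 1 / 11 := by
    have h1 : γ / (α - γ) ≤ γ / (11 / (3*m)) :=
      div_le_div_of_nonneg_left hγpos.le (by positivity) hαγ
    have h2 : γ / (11 / (3*(m:ℝ))) = 1 / 11 := by
      rw [hγ]; field_simp
    linarith
  have hS : ((m:ℝ) / 2) * γ * (1 + γ / (α - γ)) ≤ 2 / 11 := by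
    have hmγ : ((m:ℝ) / 2) * γ = 1 / 6 := by rw [hγ]; field_simp; ring
    rw [hmγ]
    linarith
  have hSnn : 0 ≤ ((m:ℝ) / 2) * γ * (1 + γ / (α - γ)) := by positivity
  set t := Real.sqrt (((m:ℝ) / 2) * γ * (1 + γ / (α - γ))) with ht
  have htnn : 0 ≤ t := Real.sqrt_nonneg _
  have htle : t ≤ 0.488 := by
    have h1 : t ≤ Real.sqrt (2 / 11) := Real.sqrt_le_sqrt hS
    have h2 : Real.sqrt (2 / 11) ≤ 0.488 := by
      rw [show (0.488 : ℝ) = Real.sqrt (0.488 ^ 2) by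
        rw [Real.sqrt_sq (by norm_num)]]
      exact Real.sqrt_le_sqrt (by norm_num)
    linarith
  have key : (1 / 8) * Y ^ 2 * α * B ^ 2 * γ ^ 2 *
      ((Y - B) / (Y ^ 2 * α + B ^ 2 * γ)) ^ 2 * (1 - t)
      = (Y - B) ^ 2 * (1 - t) / (128 * m) := by
    rw [hα, hγ]
    have hsum : Y ^ 2 * (B ^ 2 / (Y ^ 2 * m)) + B ^ 2 * (1 / (3 * m))
        = 4 * B ^ 2 / (3 * m) := by field_simp; ring
    rw [hsum]
    field_simp
    ring
  rw [key, ge_iff_le, div_le_div_iff₀ hm (by positivity)]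
  have hYB : B ^ 2 / 4 ≤ (Y - B) ^ 2 := by nlinarith
  have h1t : (0.512 : ℝ) ≤ 1 - t := by linarith
  have := mul_le_mul hYB h1t (by norm_num) (sq_nonneg _)
  nlinarith [mul_pos hm hB0, sq_nonneg B, mul_le_mul_of_nonneg_right this hm.le]
end
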